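/- If a man m̃ is matched to woman w̃ in some stable matching of a marriage market, then in the market obtained by replacing m̃'s preference list with the single-element list {w̃}, the man-optimal stable matching matches m̃ to w̃. -/

import Mathlib

/-- A one-to-one marriage market: each man `m` has a preference list over women
encoded by an injective ranking `mPref m : W → Option ℕ` (rank `some r`, with
smaller rank preferred, `none` meaning unacceptable; such a list is either
finite or of order type ω), and symmetrically for women. -/
structure MarriageMarket (M W : Type*) where
  mPref : M → W → Option ℕ
  wPref : W → M → Option ℕ
  mPref_inj : ∀ m w w' r, mPref m w = some r → mPref m w' = some r → w = w'
  wPref_inj : ∀ w m m' r, wPref w m = some r → wPref w m' = some r → m = m'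

namespace MarriageMarket

variable {M W : Type*}

/-- A matching: each man is assigned at most one woman, and each woman is assigned
to at most one man. -/
def IsMatching (μ : M → Option W) : Prop :=
  ∀ m m' w, μ m = some w → μ m' = some w → m = m'

/-- Man `m` strictly prefers woman `w` to the outcome `o` (a partner or being unmatched). -/
def ManPrefers (E : MarriageMarket M W) (m : M) (w : W) (o : Option W) : Prop :=
  ∃ r, E.mPref m w = some r ∧
    (o = none ∨ ∃ w' r', o = some w' ∧ E.mPref m w' = some r' ∧ r < r')

/-- Woman `w` strictly prefers man `m` to her assignment under the matching `μ`. -/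
def WomanPrefers (E : MarriageMarket M W) (w : W) (m : M) (μ : M → Option W) : Prop :=
  ∃ r, E.wPref w m = some r ∧
    ((∀ m', μ m' ≠ some w) ∨ ∃ m' r', μ m' = some w ∧ E.wPref w m' = some r' ∧ r < r')

/-- `(m, w)` is a blocking pair for `μ`: each strictly prefers the other to their
current assignment (or to being unmatched). -/
def Blocks (E : MarriageMarket M W) (μ : M → Option W) (m : M) (w : W) : Prop :=
  ManPrefers E m w (μ m) ∧ WomanPrefers E w m μ

/-- A stable matching: a matching that is individually rational and has no blocking pair. -/
def Stable (E : MarriageMarket M W) (μ : M → Option W) : Prop :=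
  IsMatching μ ∧
  (∀ m w, μ m = some w → E.mPref m w ≠ none ∧ E.wPref w m ≠ none) ∧
  (∀ m w, ¬ Blocks E μ m w)

/-- Man `m` weakly prefers outcome `o` to outcome `o'`: they are equal, or `o` is a
woman he ranks above `o'` (including `o'` being unmatched). -/
def ManWeaklyPrefers (E : MarriageMarket M W) (m : M) (o o' : Option W) : Prop :=
  o = o' ∨ ∃ w, o = some w ∧ ManPrefers E m w o'

/-- A man-optimal stable matching: a stable matching that every man weakly prefers
to every other stable matching. -/
def ManOptimal (E : MarriageMarket M W) (μ : M → Option W) : Prop :=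
  Stable E μ ∧ ∀ ν : M → Option W, Stable E ν → ∀ m, ManWeaklyPrefers E m (μ m) (ν m)

end MarriageMarket

open MarriageMarket in
/-- If man `mt` is matched to woman `wt` in some stable matching of the market `E`,
then in the market `E'` obtained by replacing `mt`'s preference list with the
single-element list `{wt}` (all other preferences unchanged), the man-optimal stable
matching matches `mt` to `wt`. -/
theorem truncation_matches {M W : Type*} (E E' : MarriageMarket M W) (mt : M) (wt : W)
    (μ₀ : M → Option W) (h₀ : Stable E μ₀) (hm₀ : μ₀ mt = some wt)
    (hw : E'.wPref = E.wPref) (hm : ∀ m, m ≠ mt → E'.mPref m = E.mPref m)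
    (ht1 : E'.mPref mt wt ≠ none) (ht2 : ∀ w, w ≠ wt → E'.mPref mt w = none)
    (μs : M → Option W) (hopt : ManOptimal E' μs) :
    μs mt = some wt := by
  obtain ⟨hmatch, hir, hnb⟩ := h₀
  have h₀' : Stable E' μ₀ := by
    refine ⟨hmatch, ?_, ?_⟩
    · intro m w hmw
      by_cases hmt : m = mt
      · subst hmt
        have : w = wt := by rw [hm₀] at hmw; exact (Option.some.inj hmw).symm
        subst this
        exact ⟨ht1, by rw [hw]; exact (hir _ _ hmw).2⟩
      · rw [hm m hmt, hw]; exact hir _ _ hmw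
    · intro m w ⟨⟨r, hr, hro⟩, hwp⟩
      by_cases hmt : m = mt
      · subst hmt
        by_cases hwt : w = wt
        · subst hwt
          rcases hro with h | ⟨w', r', hw', hr', hlt⟩
          · rw [hm₀] at h; exact nomatch h
          · rw [hm₀] at hw'
            obtain rfl := Option.some.inj hw'
            rw [hr] at hr'
            exact absurd (Option.some.inj hr') (by omega)
        · rw [ht2 w hwt] at hr; exact nomatch hr
      · apply hnb m w
        refine ⟨⟨r, by rw [← hm m hmt]; exact hr, ?_⟩, ?_⟩
        · rcases hro with h | ⟨w', r', hw', hr', hlt⟩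
          · exact Or.inl h
          · exact Or.inr ⟨w', r', hw', by rw [← hm m hmt]; exact hr', hlt⟩
        · obtain ⟨s, hs, hso⟩ := hwp
          rw [hw] at hs
          refine ⟨s, hs, ?_⟩
          rcases hso with h | ⟨m', s', hm', hs', hlt⟩
          · exact Or.inl h
          · exact Or.inr ⟨m', s', hm', by rw [← hw]; exact hs', hlt⟩
  have := hopt.2 μ₀ h₀' mt
  rcases this with h | ⟨w, hmw, r, hr, _⟩
  · rw [h, hm₀]
  · by_cases hwt : w = wt
    · rw [hmw, hwt]
    · rw [ht2 w hwt] at hr; exact nomatch hr
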